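/- There exists a simple graph G on a countably infinite vertex set such that G ⇒ I_n for every n ≥ 1. -/

import Mathlib

/-- An orientation of a simple graph `G`: an asymmetric relation `D` whose
symmetrization is exactly the adjacency relation of `G`. -/
def IsOrientation {V : Type*} (G : SimpleGraph V) (D : V → V → Prop) : Prop :=
  (∀ u v, ¬ (D u v ∧ D v u)) ∧ ∀ u v, G.Adj u v ↔ (D u v ∨ D v u)

/-- A digraph structure on a relation: no loops and no pairs of opposite arcs. -/
def IsDigraph {W : Type*} (E : W → W → Prop) : Prop :=
  ∀ u v, ¬ (E u v ∧ E v u)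

/-- `G ⇒ E`: every orientation `D` of `G` contains an isometric copy of the digraph `E`:
an injective map `f` inducing an isomorphism onto its image, preserving orientations,
such that distances (in the underlying undirected graphs) are preserved. -/
def IsoRamseyArrow {V W : Type*} (G : SimpleGraph V) (E : W → W → Prop) : Prop :=
  ∀ D : V → V → Prop, IsOrientation G D →
    ∃ f : W → V, Function.Injective f ∧
      (∀ u v, E u v ↔ D (f u) (f v)) ∧
      (∀ u v, (SimpleGraph.fromRel E).edist u v = G.edist (f u) (f v))

/-- The directed path `I n` on vertex set `Fin n`, with arcs `(i, i+1)`. -/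
def dirPath (n : ℕ) : Fin n → Fin n → Prop :=
  fun i j => (i : ℕ) + 1 = (j : ℕ)

namespace Stmt17Aux

open List

/-- Infinite Ramsey theorem for colorings of strictly increasing lists of naturals. -/
theorem ramseyList : ∀ (r : ℕ) (C : List ℕ → Bool),
    ∃ (g : ℕ → ℕ) (b : Bool), StrictMono g ∧
      ∀ l : List ℕ, l.length = r → l.Chain' (· < ·) → C (l.map g) = b := by
  intro r
  induction r with
  | zero =>
      intro C
      refine ⟨id, C [], strictMono_id, ?_⟩
      intro l hl _
      rw [List.length_eq_zero_iff.mp hl]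
      simp
  | succ r ih =>
      intro C
      classical
      have step : ∀ h : ℕ → ℕ, ∃ (φ : ℕ → ℕ) (b : Bool), StrictMono φ ∧ (∀ i, i < φ i) ∧
          ∀ m : List ℕ, m.length = r → m.Chain' (· < ·) →
            C (h 0 :: (m.map (fun i => h (φ i)))) = b := by
        intro h
        obtain ⟨g', b', hg', hom⟩ := ih (fun m => C (h 0 :: m.map (fun i => h (i + 1))))
        refine ⟨fun i => g' i + 1, b', fun a b hab => by
          exact Nat.add_lt_add_right (hg' hab) 1, fun i => Nat.lt_succ_of_le (hg'.id_le i), ?_⟩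
        intro m hm hmc
        have := hom m hm hmc
        simpa [List.map_map, Function.comp_def] using this
      choose φ bs hφmono hφgt hom using step
      -- the nested enumerations
      let seq : ℕ → (ℕ → ℕ) := fun k =>
        Nat.rec id (fun _ h => h ∘ φ h) k
      have seq_succ : ∀ k, seq (k + 1) = seq k ∘ φ (seq k) := fun k => rfl
      have seq_mono : ∀ k, StrictMono (seq k) := by
        intro k
        induction k with
        | zero => exact strictMono_id
        | succ k ihk => exact ihk.comp (hφmono (seq k))
      -- descent maps
      let ψ : ℕ → ℕ → ℕ → ℕ := fun k j =>
        Nat.rec id (fun j' F => if k ≤ j' then F ∘ φ (seq j') else F) j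
      have ψ_succ_pos : ∀ k j, k ≤ j → ψ k (j + 1) = ψ k j ∘ φ (seq j) := by
        intro k j h
        simp only [ψ]
        rw [if_pos h]
      have ψ_succ_neg : ∀ k j, ¬ (k ≤ j) → ψ k (j + 1) = ψ k j := by
        intro k j h
        simp only [ψ]
        rw [if_neg h]
      have ψ_id : ∀ k j, j ≤ k → ψ k j = id := by
        intro k j
        induction j with
        | zero => intro _; rfl
        | succ j ihj =>
            intro h
            rw [ψ_succ_neg k j (by omega), ihj (by omega)]
      have ψ_spec : ∀ k j, k ≤ j → ∀ i, seq j i = seq k (ψ k j i) := by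
        intro k j
        induction j with
        | zero => intro h i; interval_cases k; rfl
        | succ j ihj =>
            intro h i
            by_cases hk : k ≤ j
            · rw [seq_succ, ψ_succ_pos k j hk]
              exact ihj hk (φ (seq j) i)
            · have hkk : k = j + 1 := by omega
              rw [ψ_succ_neg k j hk, ψ_id k j (by omega), hkk]
              rfl
      have ψ_mono : ∀ k j, StrictMono (ψ k j) := by
        intro k j
        induction j with
        | zero => exact strictMono_id
        | succ j ihj =>
            by_cases hk : k ≤ j
            · rw [ψ_succ_pos k j hk]; exact ihj.comp (hφmono (seq j))
            · rw [ψ_succ_neg k j hk]; exact ihj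
      have a_mono : StrictMono (fun j => seq j 0) := by
        apply strictMono_nat_of_lt_succ
        intro j
        rw [seq_succ]
        exact (seq_mono j) (hφgt (seq j) 0)
      have ψ0_lt : ∀ k j1 j2, k ≤ j1 → j1 < j2 → ψ k j1 0 < ψ k j2 0 := by
        intro k j1 j2 h1 h2
        have hv : seq j1 0 < seq j2 0 := a_mono h2
        rw [ψ_spec k j1 h1 0, ψ_spec k j2 (by omega) 0] at hv
        exact (seq_mono k).lt_iff_lt.mp hv
      -- pigeonhole on the colours
      have hbb : ∃ b : Bool, {k | bs (seq k) = b}.Infinite := by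
        by_contra hcon
        push_neg at hcon
        have huniv : (Set.univ : Set ℕ) ⊆ {k | bs (seq k) = true} ∪ {k | bs (seq k) = false} := by
          intro k _
          rcases Bool.eq_false_or_eq_true (bs (seq k)) with h | h
          · exact Or.inl h
          · exact Or.inr h
        exact Set.infinite_univ (((hcon true).union (hcon false)).subset huniv)
      obtain ⟨b, hK⟩ := hbb
      let κ : ℕ → ℕ := Nat.nth (fun k => bs (seq k) = b)
      have hκ : StrictMono κ := Nat.nth_strictMono hK
      have hκmem : ∀ i, bs (seq (κ i)) = b := fun i => Nat.nth_mem_of_infinite hK i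
      refine ⟨fun i => seq (κ i) 0, b, ?_, ?_⟩
      · intro i j hij
        exact a_mono (hκ hij)
      · intro l hl hlc
        cases l with
        | nil => simp at hl
        | cons i0 ls =>
            have hls_len : ls.length = r := by simpa using hl
            have hpw : List.Pairwise (· < ·) (i0 :: ls) := isChain_iff_pairwise.mp hlc
            have hi0 : ∀ x ∈ ls, i0 < x := (List.pairwise_cons.mp hpw).1
            have hpwls : List.Pairwise (· < ·) ls := (List.pairwise_cons.mp hpw).2
            set k := κ i0 with hk
            have hmem : ∀ x ∈ ls, k + 1 ≤ κ x := by
              intro x hx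
              exact Nat.succ_le_of_lt (hκ (hi0 x hx))
            set F : ℕ → ℕ := fun x => ψ (k + 1) (κ x) 0 with hF
            have hmap : ls.map (fun i => seq (κ i) 0)
                = (ls.map F).map (fun i => seq k (φ (seq k) i)) := by
              rw [List.map_map]
              refine List.map_congr_left ?_
              intro x hx
              have h1 : seq (κ x) 0 = seq (k + 1) (ψ (k + 1) (κ x) 0) :=
                ψ_spec (k + 1) (κ x) (hmem x hx) 0
              rw [h1]
              rfl
            have hchainF : (ls.map F).Chain' (· < ·) := by
              apply List.Pairwise.isChain
              rw [List.pairwise_map]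
              refine hpwls.imp_of_mem ?_
              intro a c ha hc hac
              exact ψ0_lt (k + 1) (κ a) (κ c) (hmem a ha) (hκ hac)
            have hlen : (ls.map F).length = r := by simpa using hls_len
            have := hom (seq k) (ls.map F) hlen hchainF
            rw [hκmem i0] at this
            simpa [hmap] using this

/-- The shift relation on lists: `b` is obtained from `a` by deleting the head and
appending a new, larger last element; the whole combined window is increasing. -/
def lrel : List ℕ → List ℕ → Prop := fun a b =>
  ∃ x s y, a = x :: s ∧ b = s ++ [y] ∧ List.Chain' (· < ·) (x :: (s ++ [y]))

noncomputable def lenc : List ℕ ≃ ℕ := Denumerable.eqv (List ℕ)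

/-- The big graph on ℕ. -/
noncomputable def BigG : SimpleGraph ℕ :=
  SimpleGraph.fromRel (fun a b => lrel (lenc.symm a) (lenc.symm b))

lemma walk_mu {V : Type*} {G : SimpleGraph V} {μ : V → ℕ}
    (h : ∀ x y, G.Adj x y → μ x ≤ μ y + 1) {u v : V} (p : G.Walk u v) :
    μ u ≤ μ v + p.length := by
  induction p with
  | nil => simp
  | cons hadj p ih =>
      have := h _ _ hadj
      simp only [SimpleGraph.Walk.length_cons]
      omega

lemma lip_le_edist {V : Type*} {G : SimpleGraph V} {μ : V → ℕ}
    (h : ∀ x y, G.Adj x y → μ x ≤ μ y + 1) {u v : V} (hv : μ v = 0) :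
    (μ u : ℕ∞) ≤ G.edist u v := by
  refine le_iInf fun p => ?_
  have h2 := walk_mu h p
  have h3 : μ u ≤ p.length := by omega
  exact_mod_cast h3

end Stmt17Aux

theorem stmt17 :
    ∃ G : SimpleGraph ℕ, ∀ n : ℕ, 1 ≤ n → IsoRamseyArrow G (dirPath n) := by
  classical
  refine ⟨Stmt17Aux.BigG, ?_⟩
  intro n hn D hD
  obtain ⟨k, rfl⟩ : ∃ k, n = k + 1 := ⟨n - 1, by omega⟩
  open Stmt17Aux List in
  -- basic facts about the orientation
  have hDloop : ∀ x, ¬ D x x := fun x h => hD.1 x x ⟨h, h⟩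
  -- the coloring
  obtain ⟨g, b, hg, hom⟩ := ramseyList (k + 2)
    (fun m => decide (D (lenc m.dropLast) (lenc m.tail)))
  -- windows
  set w : ℕ → List ℕ := fun t => (List.range (k + 1)).map (fun j => g (t + j)) with hw
  have wcons : ∀ t, w t = g t :: (List.range k).map (fun j => g (t + 1 + j)) := by
    intro t
    simp only [hw, List.range_succ_eq_map, List.map_cons, List.map_map]
    exact congrArg₂ List.cons rfl (List.map_congr_left fun j _ => congrArg g (by omega))
  have wsnoc : ∀ t, w t = (List.range k).map (fun j => g (t + j)) ++ [g (t + k)] := by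
    intro t
    simp [hw, List.range_succ]
  have hchain : ∀ t m, List.Chain' (· < ·) ((List.range m).map (fun j => g (t + j))) := by
    intro t m
    rw [List.Chain', List.isChain_map]
    cases m with
    | zero => simp
    | succ m => exact (List.isChain_range_succ _ m).2 (fun i _ => hg (by omega))
  have hwin : ∀ t, (List.range (k + 2)).map (fun j => g (t + j))
      = g t :: ((List.range k).map (fun j => g (t + 1 + j)) ++ [g (t + 1 + k)]) := by
    intro t
    rw [List.range_succ_eq_map, List.map_cons, List.map_map]
    refine congrArg₂ List.cons rfl ?_
    rw [List.range_succ, List.map_append]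
    refine congrArg₂ (· ++ ·) (List.map_congr_left fun j _ => congrArg g (by omega)) ?_
    simp only [List.map_cons, List.map_nil]
    exact congrArg₂ List.cons (congrArg g (by omega)) rfl
  have hshift : ∀ t, lrel (w t) (w (t + 1)) := by
    intro t
    refine ⟨g t, (List.range k).map (fun j => g (t + 1 + j)), g (t + 1 + k), wcons t, ?_, ?_⟩
    · rw [wsnoc (t + 1)]
    · rw [← hwin t]
      exact hchain t (k + 2)
  -- windows have distinct values
  have hwinj : ∀ a b', w a = w b' → a = b' := by
    intro a b' h
    rw [wcons a, wcons b'] at h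
    simp only [List.cons.injEq] at h
    exact hg.injective h.1
  have hWne : ∀ a b', lenc (w a) = lenc (w b') → a = b' := by
    intro a b' h
    exact hwinj a b' (lenc.injective h)
  -- adjacency of consecutive windows
  have hadj : ∀ t, BigG.Adj (lenc (w t)) (lenc (w (t + 1))) := by
    intro t
    rw [BigG, SimpleGraph.fromRel_adj]
    refine ⟨fun h => by have := hWne _ _ h; omega, Or.inl ?_⟩
    simpa using hshift t
  -- the coloring is constant on windows
  set U : ℕ → List ℕ := fun t => (List.range (k + 2)).map (fun j => g (t + j)) with hU
  have hUdrop : ∀ t, (U t).dropLast = w t := by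
    intro t
    have : U t = (List.range (k + 1)).map (fun j => g (t + j)) ++ [g (t + (k + 1))] := by
      simp [hU, List.range_succ]
    rw [this, List.dropLast_concat]
  have hUtail : ∀ t, (U t).tail = w (t + 1) := by
    intro t
    show ((List.range (k + 2)).map (fun j => g (t + j))).tail = w (t + 1)
    rw [hwin t]
    simp only [List.tail_cons]
    rw [wsnoc (t + 1)]
  have hcol : ∀ t, decide (D (lenc (w t)) (lenc (w (t + 1)))) = b := by
    intro t
    have hchain2 : List.Chain' (· < ·) ((List.range (k + 2)).map (fun j => t + j)) := by
      rw [List.Chain', List.isChain_map]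
      exact (List.isChain_range_succ _ (k + 1)).2 (fun i _ => by omega)
    have h0 := hom ((List.range (k + 2)).map (fun j => t + j)) (by simp) hchain2
    rw [List.map_map] at h0
    have h2 : decide (D (lenc ((U t).dropLast)) (lenc ((U t).tail))) = b := h0
    rw [hUdrop t, hUtail t] at h2
    exact h2
  -- arcs between consecutive windows, all in the same direction
  have harc : (∀ t, D (lenc (w t)) (lenc (w (t + 1)))) ∨
      (∀ t, D (lenc (w (t + 1))) (lenc (w t))) := by
    cases hb : b with
    | true =>
        left
        intro t
        have h1 := hcol t
        rw [hb] at h1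
        exact of_decide_eq_true h1
    | false =>
        right
        intro t
        have h1 := hcol t
        rw [hb] at h1
        have hnd : ¬ D (lenc (w t)) (lenc (w (t + 1))) := of_decide_eq_false h1
        rcases (hD.2 _ _).1 (hadj t) with h | h
        · exact absurd h hnd
        · exact h
  -- upper bound on distances
  have hup : ∀ a d, BigG.edist (lenc (w a)) (lenc (w (a + d))) ≤ d := by
    intro a d
    induction d with
    | zero => simp
    | succ d ih =>
        have h1 : BigG.edist (lenc (w (a + d))) (lenc (w (a + d + 1))) ≤ 1 := by
          simpa using SimpleGraph.edist_le (hadj (a + d)).toWalk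
        calc BigG.edist (lenc (w a)) (lenc (w (a + (d + 1))))
            ≤ BigG.edist (lenc (w a)) (lenc (w (a + d)))
              + BigG.edist (lenc (w (a + d))) (lenc (w (a + d + 1))) := by
                rw [show a + (d + 1) = a + d + 1 from rfl]
                exact SimpleGraph.edist_triangle
          _ ≤ (d : ℕ∞) + 1 := add_le_add ih h1
          _ = ((d + 1 : ℕ) : ℕ∞) := by push_cast; ring
  -- lower bound on distances
  have hlow : ∀ a d, d ≤ k → (d : ℕ∞) ≤ BigG.edist (lenc (w a)) (lenc (w (a + d))) := by
    intro a d hd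
    set T : Finset ℕ := (w (a + d)).toFinset with hT
    set μ : ℕ → ℕ := fun x => ((lenc.symm x).toFinset \ T).card with hμ
    have hsub : ∀ (P Q : Finset ℕ) (z : ℕ), P ⊆ insert z Q →
        (P \ T).card ≤ (Q \ T).card + 1 := by
      intro P Q z hPQ
      have h1 : P \ T ⊆ insert z (Q \ T) := by
        intro x hx
        rw [Finset.mem_sdiff] at hx
        rcases Finset.mem_insert.mp (hPQ hx.1) with h | h
        · exact Finset.mem_insert.mpr (Or.inl h)
        · exact Finset.mem_insert.mpr (Or.inr (Finset.mem_sdiff.mpr ⟨h, hx.2⟩))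
      exact le_trans (Finset.card_le_card h1) (Finset.card_insert_le _ _)
    have hlip : ∀ x y, BigG.Adj x y → μ x ≤ μ y + 1 := by
      intro x y hxy
      rw [BigG, SimpleGraph.fromRel_adj] at hxy
      rcases hxy.2 with h | h
      · obtain ⟨x', s, y', hp, hq, _⟩ := h
        refine hsub _ _ x' ?_
        rw [hp, hq]
        intro z hz
        simp only [List.toFinset_cons, Finset.mem_insert, List.mem_toFinset] at hz
        simp only [Finset.mem_insert, List.mem_toFinset, List.mem_append, List.mem_singleton]
        tauto
      · obtain ⟨x', s, y', hp, hq, _⟩ := h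
        refine hsub _ _ y' ?_
        rw [hp, hq]
        intro z hz
        simp only [List.mem_toFinset, List.mem_append, List.mem_singleton] at hz
        simp only [Finset.mem_insert, List.toFinset_cons, Finset.mem_insert,
          List.mem_toFinset] at hz ⊢
        tauto
    have hμv : μ (lenc (w (a + d))) = 0 := by
      simp [hμ, hT]
    have hμu : d ≤ μ (lenc (w a)) := by
      have himg : (Finset.range d).image (fun j => g (a + j)) ⊆ (w a).toFinset \ T := by
        intro x hx
        obtain ⟨j, hj, rfl⟩ := Finset.mem_image.mp hx
        rw [Finset.mem_range] at hj
        rw [Finset.mem_sdiff]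
        constructor
        · rw [List.mem_toFinset, hw]
          exact List.mem_map.mpr ⟨j, List.mem_range.mpr (by omega), rfl⟩
        · rw [hT, List.mem_toFinset, hw]
          intro hmem
          obtain ⟨i, hi, heq⟩ := List.mem_map.mp hmem
          rw [List.mem_range] at hi
          have := hg.injective heq
          omega
      have hcard : ((Finset.range d).image (fun j => g (a + j))).card = d := by
        rw [Finset.card_image_of_injective _ (fun x y hxy => by
          have := hg.injective hxy; omega)]
        exact Finset.card_range d
      calc d = ((Finset.range d).image (fun j => g (a + j))).card := hcard.symm
        _ ≤ ((w a).toFinset \ T).card := Finset.card_le_card himg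
        _ = μ (lenc (w a)) := by simp [hμ]
    calc (d : ℕ∞) ≤ (μ (lenc (w a)) : ℕ∞) := by exact_mod_cast hμu
      _ ≤ BigG.edist (lenc (w a)) (lenc (w (a + d))) := lip_le_edist hlip hμv
  have hdist : ∀ a b', (a - b') + (b' - a) ≤ k →
      BigG.edist (lenc (w a)) (lenc (w b')) = (((a - b') + (b' - a) : ℕ) : ℕ∞) := by
    intro a b' hab
    rcases le_total a b' with h | h
    · have hb' : b' = a + (b' - a) := by omega
      rw [show ((a - b') + (b' - a) : ℕ) = b' - a from by omega]
      have h2 := _root_.le_antisymm (hup a (b' - a)) (hlow a (b' - a) (by omega))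
      rwa [← hb'] at h2
    · have ha : a = b' + (a - b') := by omega
      rw [show ((a - b') + (b' - a) : ℕ) = a - b' from by omega]
      rw [SimpleGraph.edist_comm]
      have h2 := _root_.le_antisymm (hup b' (a - b')) (hlow b' (a - b') (by omega))
      rwa [← ha] at h2
  -- distances in the path graph `fromRel (dirPath (k+1))`
  set P : SimpleGraph (Fin (k + 1)) := SimpleGraph.fromRel (dirPath (k + 1)) with hP
  have hPadj : ∀ u v : Fin (k + 1), P.Adj u v ↔
      u ≠ v ∧ ((u : ℕ) + 1 = (v : ℕ) ∨ (v : ℕ) + 1 = (u : ℕ)) := by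
    intro u v
    rw [hP, SimpleGraph.fromRel_adj]
    rfl
  have hPup : ∀ (d : ℕ) (u v : Fin (k + 1)), (u : ℕ) + d = (v : ℕ) → P.edist u v ≤ d := by
    intro d
    induction d with
    | zero =>
        intro u v h
        have : u = v := Fin.ext (by omega)
        subst this
        simp
    | succ d ihd =>
        intro u v h
        have hu1 : (u : ℕ) + 1 < k + 1 := by have := v.isLt; omega
        have hval : ((⟨(u : ℕ) + 1, hu1⟩ : Fin (k + 1)) : ℕ) = (u : ℕ) + 1 := rfl
        set u' : Fin (k + 1) := ⟨(u : ℕ) + 1, hu1⟩ with hu'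
        have hadj' : P.Adj u u' := by
          rw [hPadj]
          refine ⟨fun hEq => ?_, Or.inl hval.symm⟩
          have := congrArg Fin.val hEq
          omega
        have h1 : P.edist u u' ≤ 1 := by
          simpa using SimpleGraph.edist_le hadj'.toWalk
        have h2 : P.edist u' v ≤ d := ihd u' v (by omega)
        calc P.edist u v ≤ P.edist u u' + P.edist u' v := SimpleGraph.edist_triangle
          _ ≤ 1 + (d : ℕ∞) := add_le_add h1 h2
          _ = ((d + 1 : ℕ) : ℕ∞) := by push_cast; ring
  have hPdist : ∀ u v : Fin (k + 1),
      P.edist u v = ((((u : ℕ) - (v : ℕ)) + ((v : ℕ) - (u : ℕ)) : ℕ) : ℕ∞) := by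
    have hPlow : ∀ u v : Fin (k + 1),
        ((((u : ℕ) - (v : ℕ)) + ((v : ℕ) - (u : ℕ)) : ℕ) : ℕ∞) ≤ P.edist u v := by
      intro u v
      have hlip : ∀ x y : Fin (k + 1), P.Adj x y →
          (((x : ℕ) - (v : ℕ)) + ((v : ℕ) - (x : ℕ)))
            ≤ (((y : ℕ) - (v : ℕ)) + ((v : ℕ) - (y : ℕ))) + 1 := by
        intro x y hxy
        rcases (hPadj x y).mp hxy with ⟨_, h | h⟩ <;> omega
      have := lip_le_edist (μ := fun x : Fin (k + 1) =>
        ((x : ℕ) - (v : ℕ)) + ((v : ℕ) - (x : ℕ))) hlip (v := v) (by simp) (u := u)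
      exact this
    intro u v
    refine _root_.le_antisymm ?_ (hPlow u v)
    rcases le_total (u : ℕ) (v : ℕ) with h | h
    · rw [show (((u : ℕ) - (v : ℕ)) + ((v : ℕ) - (u : ℕ)) : ℕ) = (v : ℕ) - (u : ℕ) from by omega]
      exact hPup ((v : ℕ) - (u : ℕ)) u v (by omega)
    · rw [show (((u : ℕ) - (v : ℕ)) + ((v : ℕ) - (u : ℕ)) : ℕ) = (u : ℕ) - (v : ℕ) from by omega]
      rw [SimpleGraph.edist_comm]
      exact hPup ((u : ℕ) - (v : ℕ)) v u (by omega)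
  -- adjacency between windows forces consecutive indices (when k ≥ 1)
  have hlrelw : 1 ≤ k → ∀ a b', lrel (w a) (w b') → b' = a + 1 := by
    intro hk a b' hrel
    obtain ⟨x, s, y, hp, hq, _⟩ := hrel
    obtain ⟨k', rfl⟩ : ∃ k', k = k' + 1 := ⟨k - 1, by omega⟩
    rw [wcons a] at hp
    rw [wsnoc b'] at hq
    have hs : s = (List.range (k' + 1)).map (fun j => g (a + 1 + j)) := by
      simp only [List.cons.injEq] at hp
      exact hp.2.symm
    have hlen : ((List.range (k' + 1)).map (fun j => g (b' + j))).length = s.length := by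
      rw [hs]; simp
    obtain ⟨h1, _⟩ := List.append_inj hq hlen
    rw [hs] at h1
    simp only [List.range_succ_eq_map, List.map_cons, List.cons.injEq] at h1
    have := hg.injective h1.1
    omega
  have hadjw : 1 ≤ k → ∀ a b', BigG.Adj (lenc (w a)) (lenc (w b')) →
      b' = a + 1 ∨ a = b' + 1 := by
    intro hk a b' h
    rw [BigG, SimpleGraph.fromRel_adj] at h
    rcases h.2 with h1 | h1
    · left
      exact hlrelw hk a b' (by simpa using h1)
    · right
      exact hlrelw hk b' a (by simpa using h1)
  have hDadj : ∀ x y, D x y → BigG.Adj x y := fun x y h => (hD.2 x y).mpr (Or.inl h)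
  -- finish, in the two orientation cases
  rcases harc with hfwd | hbwd
  · refine ⟨fun i => lenc (w (i : ℕ)), ?_, ?_, ?_⟩
    · intro i j hij
      exact Fin.ext (hWne _ _ hij)
    · intro u v
      constructor
      · intro h
        have hv : (v : ℕ) = (u : ℕ) + 1 := h.symm
        show D (lenc (w (u : ℕ))) (lenc (w (v : ℕ)))
        rw [hv]
        exact hfwd (u : ℕ)
      · intro hDuv
        by_cases huv : u = v
        · exact absurd (huv ▸ hDuv) (hDloop _)
        · have hne : (u : ℕ) ≠ (v : ℕ) := fun h => huv (Fin.ext h)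
          have hk : 1 ≤ k := by have := u.isLt; have := v.isLt; omega
          rcases hadjw hk _ _ (hDadj _ _ hDuv) with h | h
          · exact h.symm
          · exfalso
            have := hfwd (v : ℕ)
            rw [← h] at this
            exact hD.1 _ _ ⟨hDuv, this⟩
    · intro u v
      rw [hPdist u v]
      show ((((u : ℕ) - (v : ℕ)) + ((v : ℕ) - (u : ℕ)) : ℕ) : ℕ∞)
          = BigG.edist (lenc (w (u : ℕ))) (lenc (w (v : ℕ)))
      exact (hdist (u : ℕ) (v : ℕ) (by have := u.isLt; have := v.isLt; omega)).symm
  · refine ⟨fun i => lenc (w (k - (i : ℕ))), ?_, ?_, ?_⟩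
    · intro i j hij
      have := hWne _ _ hij
      have hi := i.isLt
      have hj := j.isLt
      exact Fin.ext (by omega)
    · intro u v
      constructor
      · intro h
        have h' : (u : ℕ) + 1 = (v : ℕ) := h
        have hv : (v : ℕ) ≤ k := by have := v.isLt; omega
        have hk1 : k - (u : ℕ) = (k - (v : ℕ)) + 1 := by omega
        show D (lenc (w (k - (u : ℕ)))) (lenc (w (k - (v : ℕ))))
        rw [hk1]
        exact hbwd (k - (v : ℕ))
      · intro hDuv
        by_cases huv : u = v
        · exact absurd (huv ▸ hDuv) (hDloop _)
        · have hne : (u : ℕ) ≠ (v : ℕ) := fun h => huv (Fin.ext h)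
          have hk : 1 ≤ k := by have := u.isLt; have := v.isLt; omega
          have hu := u.isLt
          have hv := v.isLt
          rcases hadjw hk _ _ (hDadj _ _ hDuv) with h | h
          · exfalso
            have := hbwd (k - (u : ℕ))
            rw [← h] at this
            exact hD.1 _ _ ⟨hDuv, this⟩
          · show (u : ℕ) + 1 = (v : ℕ)
            omega
    · intro u v
      rw [hPdist u v]
      show ((((u : ℕ) - (v : ℕ)) + ((v : ℕ) - (u : ℕ)) : ℕ) : ℕ∞)
          = BigG.edist (lenc (w (k - (u : ℕ)))) (lenc (w (k - (v : ℕ))))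
      have hu := u.isLt
      have hv := v.isLt
      rw [hdist (k - (u : ℕ)) (k - (v : ℕ)) (by omega)]
      congr 1
      omega
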